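/- arXiv:1806.02109 — 3 statements merged into one kernel-verified Lean document; each statement's English description precedes it below -/
import Mathlib

section
/- For every graph G on vertex set [n] and every vertex v of G that is not a free vertex (i.e., v belongs to at least two maximal cliques), the binomial edge ideal satisfies J_G = J_{G_v} ∩ ((x_v, y_v) + J_{G \ v}), where G_v is the graph obtained from G by adding all edges between pairs of neighbors of v, and G \ v is the induced subgraph on V(G) \ {v}. -/
open MvPolynomial

/-- The binomial edge ideal of a graph `G`, in the polynomial ring whose variables
`x_v = X (Sum.inl v)` and `y_v = X (Sum.inr v)` are indexed by two copies of the
vertex set. -/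
noncomputable def beIdeal (K : Type) [Field K] {V : Type} (G : SimpleGraph V) :
    Ideal (MvPolynomial (V ⊕ V) K) :=
  Ideal.span { f | ∃ u v, G.Adj u v ∧
    f = X (Sum.inl u) * X (Sum.inr v) - X (Sum.inl v) * X (Sum.inr u) }

/-- `s` is a maximal clique of `G`. -/
def IsMaxClique {V : Type} (G : SimpleGraph V) (s : Set V) : Prop :=
  G.IsClique s ∧ ∀ t, G.IsClique t → s ⊆ t → s = t

/-- A vertex is free if it belongs to exactly one maximal clique. -/
def IsFreeVertex {V : Type} (G : SimpleGraph V) (v : V) : Prop :=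
  ∃! s : Set V, IsMaxClique G s ∧ v ∈ s

/-- The number of maximal cliques of `G`. -/
noncomputable def numMaxCliques {V : Type} (G : SimpleGraph V) : ℕ :=
  Set.ncard { s : Set V | IsMaxClique G s }

/-- `G_v`: the graph `G` with all pairs of neighbours of `v` joined by an edge. -/
def addNbhd {V : Type} (G : SimpleGraph V) (v : V) : SimpleGraph V where
  Adj u w := u ≠ w ∧ (G.Adj u w ∨ (G.Adj v u ∧ G.Adj v w))
  symm := by
    constructor
    intro u w h
    exact ⟨h.1.symm, by rcases h.2 with h' | h'
                        · exact Or.inl h'.symm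
                        · exact Or.inr ⟨h'.2, h'.1⟩⟩
  loopless := by constructor; intro u h; exact h.1 rfl

/-- Deletion of the vertex `v` (keeping `v` as an isolated vertex, so that the
ambient polynomial ring is unchanged). -/
def delVert {V : Type} (G : SimpleGraph V) (v : V) : SimpleGraph V where
  Adj u w := G.Adj u w ∧ u ≠ v ∧ w ≠ v
  symm := by constructor; intro u w h; exact ⟨h.1.symm, h.2.2, h.2.1⟩
  loopless := by constructor; intro u h; exact G.loopless.irrefl u h.1

noncomputable section

open Classical in
/-- Substitution killing the two variables attached to `v`. -/
def killV (K : Type) [Field K] {V : Type} (v : V) :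
    MvPolynomial (V ⊕ V) K →ₐ[K] MvPolynomial (V ⊕ V) K :=
  aeval (fun i => if i = Sum.inl v ∨ i = Sum.inr v then 0 else X i)

variable (K : Type) [Field K] {V : Type}

lemma killV_X_zero (v : V) (i : V ⊕ V) (h : i = Sum.inl v ∨ i = Sum.inr v) :
    killV K v (X i) = 0 := by
  simp only [killV, aeval_X]; exact if_pos h

lemma killV_X_ne (v : V) (i : V ⊕ V) (h : ¬(i = Sum.inl v ∨ i = Sum.inr v)) :
    killV K v (X i) = X i := by
  simp only [killV, aeval_X]; exact if_neg h

lemma sub_killV_mem (v : V) (f : MvPolynomial (V ⊕ V) K) :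
    f - killV K v f ∈
      Ideal.span {(X (Sum.inl v) : MvPolynomial (V ⊕ V) K), X (Sum.inr v)} := by
  classical
  set P : Ideal (MvPolynomial (V ⊕ V) K) :=
    Ideal.span {(X (Sum.inl v) : MvPolynomial (V ⊕ V) K), X (Sum.inr v)} with hP
  induction f using MvPolynomial.induction_on with
  | C a => simp [killV]
  | add p q hp hq =>
      have : p + q - killV K v (p + q) = (p - killV K v p) + (q - killV K v q) := by
        rw [map_add]; ring
      rw [this]; exact P.add_mem hp hq
  | mul_X p i hp =>
      have hXi : X i - killV K v (X i) ∈ P := by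
        by_cases h : i = Sum.inl v ∨ i = Sum.inr v
        · rw [killV_X_zero K v i h, sub_zero]
          rcases h with h | h <;> subst h
          · exact Ideal.subset_span (by simp)
          · exact Ideal.subset_span (by simp)
        · rw [killV_X_ne K v i h, sub_self]; exact P.zero_mem
      have : p * X i - killV K v (p * X i)
          = (p - killV K v p) * X i + killV K v p * (X i - killV K v (X i)) := by
        rw [map_mul]; ring
      rw [this]
      exact P.add_mem (Ideal.mul_mem_right _ _ hp) (Ideal.mul_mem_left _ _ hXi)

lemma killV_X_inl (v u : V) (h : u ≠ v) :
    killV K v (X (Sum.inl u) : MvPolynomial (V ⊕ V) K) = X (Sum.inl u) :=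
  killV_X_ne K v _ (by simp [h])

lemma killV_X_inr (v u : V) (h : u ≠ v) :
    killV K v (X (Sum.inr u) : MvPolynomial (V ⊕ V) K) = X (Sum.inr u) :=
  killV_X_ne K v _ (by simp [h])

/-- abbreviation for the binomial generator -/
def fgen {V : Type} (K : Type) [Field K] (u w : V) : MvPolynomial (V ⊕ V) K :=
  X (Sum.inl u) * X (Sum.inr w) - X (Sum.inl w) * X (Sum.inr u)

lemma gen_mem (G : SimpleGraph V) {u w : V} (h : G.Adj u w) :
    fgen K u w ∈ beIdeal K G :=
  Ideal.subset_span ⟨u, w, h, rfl⟩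

lemma killV_fgen (v u w : V) (hu : u ≠ v) (hw : w ≠ v) :
    killV K v (fgen K u w) = fgen K u w := by
  simp only [fgen, map_sub, map_mul, killV_X_inl K v u hu, killV_X_inr K v u hu,
    killV_X_inl K v w hw, killV_X_inr K v w hw]

lemma killV_fgen_zero_left (v w : V) : killV K v (fgen K v w) = 0 := by
  simp [fgen, killV_X_zero K v (Sum.inl v) (Or.inl rfl),
    killV_X_zero K v (Sum.inr v) (Or.inr rfl)]

lemma killV_fgen_zero_right (v u : V) : killV K v (fgen K u v) = 0 := by
  simp [fgen, killV_X_zero K v (Sum.inl v) (Or.inl rfl),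
    killV_X_zero K v (Sum.inr v) (Or.inr rfl)]

/-- Ohtani's trick : `P * fgen u w ⊆ J_G` for `u, w` neighbours of `v`. -/
lemma mulP_mem (G : SimpleGraph V) (v : V) {u w : V}
    (hu : G.Adj v u) (hw : G.Adj v w) {p : MvPolynomial (V ⊕ V) K}
    (hp : p ∈ Ideal.span {(X (Sum.inl v) : MvPolynomial (V ⊕ V) K), X (Sum.inr v)}) :
    p * fgen K u w ∈ beIdeal K G := by
  have h1 : fgen K v w ∈ beIdeal K G := gen_mem K G hw
  have h2 : fgen K v u ∈ beIdeal K G := gen_mem K G hu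
  have hx : (X (Sum.inl v) : MvPolynomial (V ⊕ V) K) * fgen K u w
      = X (Sum.inl u) * fgen K v w - X (Sum.inl w) * fgen K v u := by
    simp only [fgen]; ring
  have hy : (X (Sum.inr v) : MvPolynomial (V ⊕ V) K) * fgen K u w
      = X (Sum.inr u) * fgen K v w - X (Sum.inr w) * fgen K v u := by
    simp only [fgen]; ring
  obtain ⟨a, b, hab⟩ := Ideal.mem_span_pair.mp hp
  have : p * fgen K u w = a * (X (Sum.inl v) * fgen K u w)
      + b * (X (Sum.inr v) * fgen K u w) := by rw [← hab]; ring
  rw [this, hx, hy]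
  refine Ideal.add_mem _ (Ideal.mul_mem_left _ _ ?_) (Ideal.mul_mem_left _ _ ?_) <;>
    exact sub_mem (Ideal.mul_mem_left _ _ h1) (Ideal.mul_mem_left _ _ h2)

lemma claimA (G : SimpleGraph V) (v : V) {g : MvPolynomial (V ⊕ V) K}
    (hg : g ∈ beIdeal K (addNbhd G v)) :
    g - killV K v g ∈ beIdeal K G := by
  set P : Ideal (MvPolynomial (V ⊕ V) K) :=
    Ideal.span {(X (Sum.inl v) : MvPolynomial (V ⊕ V) K), X (Sum.inr v)} with hP
  have main : g - killV K v g ∈ beIdeal K G ∧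
      ∀ p ∈ P, p * killV K v g ∈ beIdeal K G := by
    refine Submodule.span_induction ?_ ?_ ?_ ?_ hg
    · rintro f ⟨u, w, ⟨hne, hadj⟩, rfl⟩
      have hfg : X (Sum.inl u) * X (Sum.inr w) - X (Sum.inl w) * X (Sum.inr u)
          = fgen K u w := rfl
      rw [hfg]
      rcases hadj with hadj | ⟨hu, hw⟩
      · -- edge of G
        have hfJ : fgen K u w ∈ beIdeal K G := gen_mem K G hadj
        by_cases huv : u = v
        · have h0 : killV K v (fgen K u w) = 0 := by
            rw [huv]; exact killV_fgen_zero_left K v w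
          rw [h0]; exact ⟨by simpa using hfJ, fun p _ => by simp⟩
        · by_cases hwv : w = v
          · have h0 : killV K v (fgen K u w) = 0 := by
              rw [hwv]; exact killV_fgen_zero_right K v u
            rw [h0]; exact ⟨by simpa using hfJ, fun p _ => by simp⟩
          · rw [killV_fgen K v u w huv hwv]
            exact ⟨by simp, fun p _ => Ideal.mul_mem_left _ _ hfJ⟩
      · -- pair of neighbours of v
        have huv : u ≠ v := fun h => G.irrefl (h ▸ hu)
        have hwv : w ≠ v := fun h => G.irrefl (h ▸ hw)
        rw [killV_fgen K v u w huv hwv]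
        exact ⟨by simp, fun p hp => mulP_mem K G v hu hw hp⟩
    · exact ⟨by simp, fun p _ => by simp⟩
    · rintro x y hx hy ⟨hx1, hx2⟩ ⟨hy1, hy2⟩
      constructor
      · have : x + y - killV K v (x + y) = (x - killV K v x) + (y - killV K v y) := by
          rw [map_add]; ring
        rw [this]; exact Ideal.add_mem _ hx1 hy1
      · intro p hp
        rw [map_add, mul_add]
        exact Ideal.add_mem _ (hx2 p hp) (hy2 p hp)
    · rintro a x hx ⟨hx1, hx2⟩
      rw [smul_eq_mul]
      constructor
      · have : a * x - killV K v (a * x)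
            = a * (x - killV K v x) + (a - killV K v a) * killV K v x := by
          rw [map_mul]; ring
        rw [this]
        exact Ideal.add_mem _ (Ideal.mul_mem_left _ _ hx1)
          (hx2 _ (sub_killV_mem K v a))
      · intro p hp
        rw [map_mul]
        have : p * (killV K v a * killV K v x) = (p * killV K v a) * killV K v x := by
          ring
        rw [this]
        exact hx2 _ (Ideal.mul_mem_right _ _ hp)
  exact main.1

lemma claimB (G : SimpleGraph V) (v : V) {g : MvPolynomial (V ⊕ V) K}
    (hg : g ∈ Ideal.span {(X (Sum.inl v) : MvPolynomial (V ⊕ V) K), X (Sum.inr v)} ⊔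
      beIdeal K (delVert G v)) :
    killV K v g ∈ beIdeal K (delVert G v) := by
  have hle : Ideal.map (killV K v).toRingHom
      (Ideal.span {(X (Sum.inl v) : MvPolynomial (V ⊕ V) K), X (Sum.inr v)} ⊔
        beIdeal K (delVert G v)) ≤ beIdeal K (delVert G v) := by
    rw [Ideal.map_le_iff_le_comap, sup_le_iff]
    constructor
    · rw [Ideal.span_le]
      rintro f (rfl | rfl)
      · simp only [SetLike.mem_coe, Set.mem_setOf_eq, Ideal.mem_comap,
          AlgHom.toRingHom_eq_coe, RingHom.coe_coe]
        rw [killV_X_zero K v _ (Or.inl rfl)]; exact Ideal.zero_mem _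
      · simp only [SetLike.mem_coe, Set.mem_setOf_eq, Ideal.mem_comap,
          AlgHom.toRingHom_eq_coe, RingHom.coe_coe]
        rw [killV_X_zero K v _ (Or.inr rfl)]; exact Ideal.zero_mem _
    · rw [beIdeal, Ideal.span_le]
      rintro f ⟨u, w, ⟨hadj, hu, hw⟩, rfl⟩
      simp only [SetLike.mem_coe, Ideal.mem_comap, AlgHom.toRingHom_eq_coe, RingHom.coe_coe]
      have : killV K v (fgen K u w) = fgen K u w := killV_fgen K v u w hu hw
      rw [show X (Sum.inl u) * X (Sum.inr w) - X (Sum.inl w) * X (Sum.inr u)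
        = fgen K u w from rfl, this]
      exact gen_mem K _ ⟨hadj, hu, hw⟩
  exact hle (Ideal.mem_map_of_mem _ hg)

end

/-- Ohtani's lemma: for a non-free vertex `v` of `G`, the binomial edge ideal
decomposes as `J_G = J_{G_v} ∩ ((x_v, y_v) + J_{G \ v})`. -/
theorem beIdeal_eq_inter_of_not_free (K : Type) [Field K] {V : Type} [Fintype V]
    (G : SimpleGraph V) (v : V) (hv : ¬ IsFreeVertex G v) :
    beIdeal K G =
      beIdeal K (addNbhd G v) ⊓
        (Ideal.span {(X (Sum.inl v) : MvPolynomial (V ⊕ V) K), X (Sum.inr v)} ⊔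
          beIdeal K (delVert G v)) := by
  classical
  have hxv : (X (Sum.inl v) : MvPolynomial (V ⊕ V) K) ∈
      Ideal.span {(X (Sum.inl v) : MvPolynomial (V ⊕ V) K), X (Sum.inr v)} :=
    Ideal.subset_span (by simp)
  have hyv : (X (Sum.inr v) : MvPolynomial (V ⊕ V) K) ∈
      Ideal.span {(X (Sum.inl v) : MvPolynomial (V ⊕ V) K), X (Sum.inr v)} :=
    Ideal.subset_span (by simp)
  apply le_antisymm
  · refine le_inf ?_ ?_
    · rw [beIdeal, Ideal.span_le]
      rintro f ⟨u, w, h, rfl⟩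
      exact Ideal.subset_span ⟨u, w, ⟨h.ne, Or.inl h⟩, rfl⟩
    · rw [beIdeal, Ideal.span_le]
      rintro f ⟨u, w, h, rfl⟩
      simp only [SetLike.mem_coe]
      by_cases huv : u = v
      · subst huv
        exact Ideal.mem_sup_left
          (sub_mem (Ideal.mul_mem_right _ _ hxv) (Ideal.mul_mem_left _ _ hyv))
      · by_cases hwv : w = v
        · subst hwv
          exact Ideal.mem_sup_left
            (sub_mem (Ideal.mul_mem_left _ _ hyv) (Ideal.mul_mem_right _ _ hxv))
        · exact Ideal.mem_sup_right (gen_mem K _ ⟨h, huv, hwv⟩)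
  · intro g hg
    rw [Submodule.mem_inf] at hg
    obtain ⟨h1, h2⟩ := hg
    have hA := claimA K G v h1
    have hB := claimB K G v h2
    have hdel : beIdeal K (delVert G v) ≤ beIdeal K G := by
      rw [beIdeal, Ideal.span_le]
      rintro f ⟨u, w, h, rfl⟩
      exact Ideal.subset_span ⟨u, w, h.1, rfl⟩
    have hsum := Ideal.add_mem _ hA (hdel hB)
    simpa using hsum
end

section
/- For any graph G on [n], the binomial edge ideal admits the primary-type decomposition J_G = ∩_{T ⊆ [n]} P_T(G), where P_T(G) = ({x_i, y_i : i ∈ T}) + J_{\tilde G_1} + ... + J_{\tilde G_{c_G(T)}} and \tilde G_1,...,\tilde G_{c_G(T)} are the complete graphs on the vertex sets of the connected components of G restricted to [n] \ T. -/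
open MvPolynomial

/-- Deletion of a set of vertices (keeping them as isolated vertices so that the
ambient polynomial ring is unchanged). -/
def delSet {V : Type} (G : SimpleGraph V) (T : Set V) : SimpleGraph V where
  Adj u w := G.Adj u w ∧ u ∉ T ∧ w ∉ T
  symm := ⟨by rintro u w ⟨h, h1, h2⟩; exact ⟨h.symm, h2, h1⟩⟩
  loopless := ⟨by rintro u ⟨h, _⟩; exact G.irrefl h⟩

/-- The disjoint union of the complete graphs on the vertex sets of the connected
components of `G` with the vertices of `T` removed. -/
def tildeG {V : Type} (G : SimpleGraph V) (T : Set V) : SimpleGraph V where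
  Adj u w := u ≠ w ∧ u ∉ T ∧ w ∉ T ∧ (delSet G T).Reachable u w
  symm := ⟨by rintro u w ⟨h, h1, h2, h3⟩; exact ⟨h.symm, h2, h1, h3.symm⟩⟩
  loopless := ⟨by rintro u ⟨h, _⟩; exact h rfl⟩

/-- The ideal `P_T(G)`: the variables indexed by `T` together with the binomial
edge ideals of the complete graphs on the connected components of `G` with the
vertices of `T` removed. -/
noncomputable def PTIdeal (K : Type) [Field K] {V : Type} (G : SimpleGraph V) (T : Set V) :
    Ideal (MvPolynomial (V ⊕ V) K) :=
  Ideal.span ((fun i => (X (Sum.inl i) : MvPolynomial (V ⊕ V) K)) '' T ∪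
      (fun i => (X (Sum.inr i) : MvPolynomial (V ⊕ V) K)) '' T) ⊔
    beIdeal K (tildeG G T)

namespace BEI

variable {K : Type} [Field K] {V : Type}

lemma beIdeal_mono {G G' : SimpleGraph V} (h : G ≤ G') : beIdeal K G ≤ beIdeal K G' := by
  apply Ideal.span_mono
  rintro f ⟨u, w, hadj, rfl⟩
  exact ⟨u, w, h hadj, rfl⟩

lemma delSet_mono {G G' : SimpleGraph V} (h : G ≤ G') (T : Set V) :
    delSet G T ≤ delSet G' T := by
  rintro u w ⟨ha, h1, h2⟩; exact ⟨h ha, h1, h2⟩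

lemma tildeG_mono {G G' : SimpleGraph V} (h : G ≤ G') (T : Set V) :
    tildeG G T ≤ tildeG G' T := by
  rintro u w ⟨hne, h1, h2, hr⟩
  exact ⟨hne, h1, h2, hr.mono (delSet_mono h T)⟩

lemma PTIdeal_mono {G G' : SimpleGraph V} (h : G ≤ G') (T : Set V) :
    PTIdeal K G T ≤ PTIdeal K G' T :=
  sup_le_sup_left (beIdeal_mono (tildeG_mono h T)) _

lemma le_tildeG (G : SimpleGraph V) : G ≤ tildeG G ∅ := by
  intro u w h
  exact ⟨G.ne_of_adj h, Set.notMem_empty u, Set.notMem_empty w,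
    (SimpleGraph.Adj.reachable (⟨h, Set.notMem_empty u, Set.notMem_empty w⟩ :
      (delSet G ∅).Adj u w))⟩

lemma beIdeal_le_PTIdeal (G : SimpleGraph V) (T : Set V) :
    beIdeal K G ≤ PTIdeal K G T := by
  rw [beIdeal, Ideal.span_le]
  rintro f ⟨u, w, hadj, rfl⟩
  by_cases hu : u ∈ T
  · apply Ideal.mem_sup_left
    have hx : (X (Sum.inl u) : MvPolynomial (V ⊕ V) K) ∈
        Ideal.span ((fun i => (X (Sum.inl i) : MvPolynomial (V ⊕ V) K)) '' T ∪
          (fun i => (X (Sum.inr i) : MvPolynomial (V ⊕ V) K)) '' T) :=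
      Ideal.subset_span (Or.inl ⟨u, hu, rfl⟩)
    have hy : (X (Sum.inr u) : MvPolynomial (V ⊕ V) K) ∈
        Ideal.span ((fun i => (X (Sum.inl i) : MvPolynomial (V ⊕ V) K)) '' T ∪
          (fun i => (X (Sum.inr i) : MvPolynomial (V ⊕ V) K)) '' T) :=
      Ideal.subset_span (Or.inr ⟨u, hu, rfl⟩)
    exact sub_mem (Ideal.mul_mem_right _ _ hx) (Ideal.mul_mem_left _ _ hy)
  · by_cases hw : w ∈ T
    · apply Ideal.mem_sup_left
      have hx : (X (Sum.inl w) : MvPolynomial (V ⊕ V) K) ∈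
          Ideal.span ((fun i => (X (Sum.inl i) : MvPolynomial (V ⊕ V) K)) '' T ∪
            (fun i => (X (Sum.inr i) : MvPolynomial (V ⊕ V) K)) '' T) :=
        Ideal.subset_span (Or.inl ⟨w, hw, rfl⟩)
      have hy : (X (Sum.inr w) : MvPolynomial (V ⊕ V) K) ∈
          Ideal.span ((fun i => (X (Sum.inl i) : MvPolynomial (V ⊕ V) K)) '' T ∪
            (fun i => (X (Sum.inr i) : MvPolynomial (V ⊕ V) K)) '' T) :=
        Ideal.subset_span (Or.inr ⟨w, hw, rfl⟩)
      exact sub_mem (Ideal.mul_mem_left _ _ hy) (Ideal.mul_mem_right _ _ hx)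
    · apply Ideal.mem_sup_right
      apply Ideal.subset_span
      exact ⟨u, w, ⟨G.ne_of_adj hadj, hu, hw,
        SimpleGraph.Adj.reachable (⟨hadj, hu, hw⟩ : (delSet G T).Adj u w)⟩, rfl⟩

open Classical in
noncomputable section

variable {K : Type} [Field K] {V : Type}

noncomputable def psi (K : Type) [Field K] {V : Type} (v : V) :
    MvPolynomial (V ⊕ V) K →ₐ[K] MvPolynomial (V ⊕ V) K :=
  aeval (fun i => if i = Sum.inl v ∨ i = Sum.inr v then 0 else X i)

noncomputable def Qv (K : Type) [Field K] {V : Type} (v : V) : Ideal (MvPolynomial (V ⊕ V) K) :=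
  Ideal.span {X (Sum.inl v), X (Sum.inr v)}

lemma psi_X_inl (v u : V) :
    psi K v (X (Sum.inl u)) = if u = v then 0 else X (Sum.inl u) := by
  simp [psi]

lemma psi_X_inr (v u : V) :
    psi K v (X (Sum.inr u)) = if u = v then 0 else X (Sum.inr u) := by
  simp [psi]

lemma X_mem_Qv_left (v : V) : (X (Sum.inl v) : MvPolynomial (V ⊕ V) K) ∈ Qv K v :=
  Ideal.subset_span (by simp)

lemma X_mem_Qv_right (v : V) : (X (Sum.inr v) : MvPolynomial (V ⊕ V) K) ∈ Qv K v :=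
  Ideal.subset_span (by simp)

lemma sub_psi_mem_Qv (v : V) (f : MvPolynomial (V ⊕ V) K) : f - psi K v f ∈ Qv K v := by
  induction f using MvPolynomial.induction_on with
  | C a => simp
  | add p q hp hq =>
      have : p + q - psi K v (p + q) = (p - psi K v p) + (q - psi K v q) := by
        rw [map_add]; ring
      rw [this]; exact add_mem hp hq
  | mul_X p i hp =>
      by_cases h : i = Sum.inl v ∨ i = Sum.inr v
      · have hX : psi K v (X i) = 0 := by simp [psi, h]
        have : p * X i - psi K v (p * X i) = p * X i := by
          rw [map_mul, hX, mul_zero, sub_zero]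
        rw [this]
        have hXQ : (X i : MvPolynomial (V ⊕ V) K) ∈ Qv K v := by
          rcases h with h | h <;> subst h
          · exact X_mem_Qv_left v
          · exact X_mem_Qv_right v
        exact Ideal.mul_mem_left _ _ hXQ
      · have hX : psi K v (X i) = X i := by simp [psi, h]
        have : p * X i - psi K v (p * X i) = (p - psi K v p) * X i := by
          rw [map_mul, hX]; ring
        rw [this]
        exact Ideal.mul_mem_right _ _ hp


def addClique {V : Type} (G : SimpleGraph V) (v : V) : SimpleGraph V where
  Adj u w := G.Adj u w ∨ (u ≠ w ∧ G.Adj v u ∧ G.Adj v w)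
  symm := ⟨by
    rintro u w (h | ⟨h1, h2, h3⟩)
    · exact Or.inl h.symm
    · exact Or.inr ⟨h1.symm, h3, h2⟩⟩
  loopless := ⟨by
    rintro u (h | ⟨h1, _⟩)
    · exact G.irrefl h
    · exact h1 rfl⟩

lemma le_addClique (G : SimpleGraph V) (v : V) : G ≤ addClique G v :=
  fun _ _ h => Or.inl h

lemma addClique_adj_v {G : SimpleGraph V} {v w : V}
    (h : (addClique G v).Adj v w) : G.Adj v w := by
  rcases h with h | ⟨_, h2, _⟩
  · exact h
  · exact absurd h2 G.irrefl

lemma psi_mem_beIdeal (v : V) (H : SimpleGraph V) {f : MvPolynomial (V ⊕ V) K}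
    (hf : f ∈ beIdeal K H) : psi K v f ∈ beIdeal K H := by
  have : beIdeal K H ≤ Ideal.comap (psi K v) (beIdeal K H) := by
    rw [beIdeal, Ideal.span_le]
    rintro f ⟨u, w, hadj, rfl⟩
    simp only [SetLike.mem_coe, Ideal.mem_comap, map_sub, map_mul,
      psi_X_inl, psi_X_inr]
    by_cases hu : u = v <;> by_cases hw : w = v <;> simp [hu, hw]
    exact Ideal.subset_span ⟨u, w, hadj, rfl⟩
  exact this hf

lemma Qv_mul_le (v : V) (G : SimpleGraph V) :
    Qv K v * beIdeal K (addClique G v) ≤ beIdeal K G := by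
  rw [Qv, beIdeal, Ideal.span_mul_span', Ideal.span_le]
  rintro g ⟨a, ha, b, ⟨u, w, hadj, rfl⟩, rfl⟩
  have hgen : ∀ p q : V, G.Adj p q →
      (X (Sum.inl p) * X (Sum.inr q) - X (Sum.inl q) * X (Sum.inr p) :
        MvPolynomial (V ⊕ V) K) ∈ beIdeal K G :=
    fun p q h => Ideal.subset_span ⟨p, q, h, rfl⟩
  show a * (X (Sum.inl u) * X (Sum.inr w) - X (Sum.inl w) * X (Sum.inr u)) ∈ beIdeal K G
  rcases hadj with hadj | ⟨hne, hvu, hvw⟩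
  · exact Ideal.mul_mem_left _ _ (hgen u w hadj)
  · simp only [Set.mem_insert_iff, Set.mem_singleton_iff] at ha
    rcases ha with rfl | rfl
    · have key : (X (Sum.inl v) : MvPolynomial (V ⊕ V) K) *
          (X (Sum.inl u) * X (Sum.inr w) - X (Sum.inl w) * X (Sum.inr u)) =
          X (Sum.inl u) * (X (Sum.inl v) * X (Sum.inr w) - X (Sum.inl w) * X (Sum.inr v)) -
          X (Sum.inl w) * (X (Sum.inl v) * X (Sum.inr u) - X (Sum.inl u) * X (Sum.inr v)) := by
        ring
      rw [key]
      exact sub_mem (Ideal.mul_mem_left _ _ (hgen v w hvw)) (Ideal.mul_mem_left _ _ (hgen v u hvu))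
    · have key : (X (Sum.inr v) : MvPolynomial (V ⊕ V) K) *
          (X (Sum.inl u) * X (Sum.inr w) - X (Sum.inl w) * X (Sum.inr u)) =
          X (Sum.inr u) * (X (Sum.inl v) * X (Sum.inr w) - X (Sum.inl w) * X (Sum.inr v)) -
          X (Sum.inr w) * (X (Sum.inl v) * X (Sum.inr u) - X (Sum.inl u) * X (Sum.inr v)) := by
        ring
      rw [key]
      exact sub_mem (Ideal.mul_mem_left _ _ (hgen v w hvw)) (Ideal.mul_mem_left _ _ (hgen v u hvu))

lemma sub_psi_mem_beIdeal (v : V) (G : SimpleGraph V) {f : MvPolynomial (V ⊕ V) K}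
    (hf : f ∈ beIdeal K (addClique G v)) : f - psi K v f ∈ beIdeal K G := by
  rw [beIdeal] at hf
  induction hf using Submodule.span_induction with
  | mem g hg =>
      obtain ⟨u, w, hadj, rfl⟩ := hg
      by_cases hu : u = v
      · have hG : G.Adj u w := by subst hu; exact addClique_adj_v hadj
        have : psi K v (X (Sum.inl u) * X (Sum.inr w) - X (Sum.inl w) * X (Sum.inr u) :
            MvPolynomial (V ⊕ V) K) = 0 := by
          rw [map_sub, map_mul, map_mul, psi_X_inl, psi_X_inr, psi_X_inl, psi_X_inr]
          simp [hu]
        rw [this, sub_zero]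
        exact Ideal.subset_span ⟨u, w, hG, rfl⟩
      · by_cases hw : w = v
        · have hG : G.Adj u w := by
            subst hw; exact (addClique_adj_v hadj.symm).symm
          have : psi K v (X (Sum.inl u) * X (Sum.inr w) - X (Sum.inl w) * X (Sum.inr u) :
              MvPolynomial (V ⊕ V) K) = 0 := by
            rw [map_sub, map_mul, map_mul, psi_X_inl, psi_X_inr, psi_X_inl, psi_X_inr]
            simp [hw]
          rw [this, sub_zero]
          exact Ideal.subset_span ⟨u, w, hG, rfl⟩
        · have : psi K v (X (Sum.inl u) * X (Sum.inr w) - X (Sum.inl w) * X (Sum.inr u) :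
              MvPolynomial (V ⊕ V) K) =
              X (Sum.inl u) * X (Sum.inr w) - X (Sum.inl w) * X (Sum.inr u) := by
            rw [map_sub, map_mul, map_mul, psi_X_inl, psi_X_inr, psi_X_inl, psi_X_inr]
            simp [hu, hw]
          rw [this, sub_self]
          exact Ideal.zero_mem _
  | zero => simp
  | add x y hx hy ihx ihy =>
      have : x + y - psi K v (x + y) = (x - psi K v x) + (y - psi K v y) := by
        rw [map_add]; ring
      rw [this]; exact add_mem ihx ihy
  | smul a x hx ih =>
      have hsm : a • x = a * x := rfl
      have : a • x - psi K v (a • x) =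
          a * (x - psi K v x) + (a - psi K v a) * psi K v x := by
        rw [hsm, map_mul]; ring
      rw [this]
      refine add_mem (Ideal.mul_mem_left _ _ ih) ?_
      exact Qv_mul_le v G (Ideal.mul_mem_mul (sub_psi_mem_Qv v a) (psi_mem_beIdeal v _ hx))

lemma delSet_le (G : SimpleGraph V) (T : Set V) : delSet G T ≤ G :=
  fun _ _ h => h.1

lemma delSet_empty (G : SimpleGraph V) : delSet G ∅ = G := by
  ext u w
  show G.Adj u w ∧ u ∉ (∅ : Set V) ∧ w ∉ (∅ : Set V) ↔ G.Adj u w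
  simp

lemma reachable_addClique {G : SimpleGraph V} {v a b : V}
    (h : (addClique G v).Reachable a b) : G.Reachable a b := by
  obtain ⟨p⟩ := h
  induction p with
  | nil => exact SimpleGraph.Reachable.refl _
  | cons h q ih =>
      refine SimpleGraph.Reachable.trans ?_ ih
      rcases h with h | ⟨_, h2, h3⟩
      · exact h.reachable
      · exact (h2.symm.reachable).trans h3.reachable

lemma tildeG_addClique_empty (G : SimpleGraph V) (v : V) :
    tildeG (addClique G v) ∅ = tildeG G ∅ := by
  apply le_antisymm
  · rintro u w ⟨hne, h1, h2, hr⟩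
    rw [delSet_empty] at hr
    refine ⟨hne, h1, h2, ?_⟩
    rw [delSet_empty]
    exact reachable_addClique hr
  · exact tildeG_mono (le_addClique G v) ∅

lemma reachable_delSet_singleton {G : SimpleGraph V} {v b : V}
    (h : (delSet G {v}).Reachable v b) : v = b := by
  obtain ⟨p⟩ := h
  cases p with
  | nil => rfl
  | cons h q => exact absurd (Set.mem_singleton v) h.2.1

noncomputable def mG (G : SimpleGraph V) : ℕ :=
  ((tildeG G ∅).edgeSet \ G.edgeSet).ncard

noncomputable def nG (G : SimpleGraph V) : ℕ := {x | ∃ u, G.Adj x u}.ncard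

noncomputable def mu (G : SimpleGraph V) : ℕ := mG G * (Nat.card V + 1) + nG G

section Fin
variable [Fintype V]

lemma mu_addClique_lt {G : SimpleGraph V} {v a b : V} (hva : G.Adj v a) (hvb : G.Adj v b)
    (hab : a ≠ b) (hnab : ¬ G.Adj a b) : mu (addClique G v) < mu G := by
  have hm : mG (addClique G v) < mG G := by
    unfold mG
    apply Set.ncard_lt_ncard _ (Set.toFinite _)
    rw [tildeG_addClique_empty]
    have hsub : (tildeG G ∅).edgeSet \ (addClique G v).edgeSet ⊆
        (tildeG G ∅).edgeSet \ G.edgeSet := by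
      intro e he
      exact ⟨he.1, fun hc =>
        he.2 ((SimpleGraph.edgeSet_subset_edgeSet.mpr (le_addClique G v)) hc)⟩
    rw [Set.ssubset_iff_of_subset hsub]
    refine ⟨s(a, b), ?_, ?_⟩
    · rw [Set.mem_diff, SimpleGraph.mem_edgeSet, SimpleGraph.mem_edgeSet]
      refine ⟨⟨hab, Set.notMem_empty a, Set.notMem_empty b, ?_⟩, hnab⟩
      rw [delSet_empty]
      exact (hva.symm.reachable).trans hvb.reachable
    · rw [Set.mem_diff, SimpleGraph.mem_edgeSet, SimpleGraph.mem_edgeSet]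
      rintro ⟨-, hc⟩
      exact hc (Or.inr ⟨hab, hva, hvb⟩)
  have hn : nG (addClique G v) ≤ Nat.card V := by
    rw [nG, ← Set.ncard_univ]
    exact Set.ncard_le_ncard (Set.subset_univ _) (Set.toFinite _)
  have h1 : mG (addClique G v) + 1 ≤ mG G := hm
  calc mu (addClique G v) = mG (addClique G v) * (Nat.card V + 1) + nG (addClique G v) := rfl
    _ < mG (addClique G v) * (Nat.card V + 1) + (Nat.card V + 1) :=
        Nat.add_lt_add_left (Nat.lt_succ_of_le hn) _
    _ = (mG (addClique G v) + 1) * (Nat.card V + 1) := by ring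
    _ ≤ mG G * (Nat.card V + 1) := Nat.mul_le_mul_right _ h1
    _ ≤ mu G := Nat.le_add_right _ _

lemma mu_delSet_lt {G : SimpleGraph V} {v a : V} (hva : G.Adj v a) :
    mu (delSet G {v}) < mu G := by
  have hm : mG (delSet G {v}) ≤ mG G := by
    unfold mG
    apply Set.ncard_le_ncard _ (Set.toFinite _)
    intro e
    induction e using Sym2.ind with
    | _ x y =>
      intro he
      rw [Set.mem_diff, SimpleGraph.mem_edgeSet, SimpleGraph.mem_edgeSet] at he ⊢
      obtain ⟨⟨hne, -, -, hr⟩, hnadj⟩ := he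
      rw [delSet_empty] at hr
      have hx : x ≠ v := by rintro rfl; exact hne (reachable_delSet_singleton hr)
      have hy : y ≠ v := by
        rintro rfl
        exact hne (reachable_delSet_singleton hr.symm).symm
      constructor
      · refine ⟨hne, Set.notMem_empty x, Set.notMem_empty y, ?_⟩
        rw [delSet_empty]
        exact hr.mono (delSet_le G {v})
      · intro h
        exact hnadj ⟨h, by simp [hx], by simp [hy]⟩
  have hn : nG (delSet G {v}) < nG G := by
    apply Set.ncard_lt_ncard _ (Set.toFinite _)
    have hsub : {x | ∃ u, (delSet G {v}).Adj x u} ⊆ {x | ∃ u, G.Adj x u} := by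
      rintro x ⟨u, hu⟩
      exact ⟨u, hu.1⟩
    rw [Set.ssubset_iff_of_subset hsub]
    refine ⟨v, ⟨a, hva⟩, ?_⟩
    rintro ⟨u, hu⟩
    exact hu.2.1 rfl
  exact add_lt_add_of_le_of_lt (Nat.mul_le_mul_right _ hm) hn

end Fin

lemma exists_pattern_of_walk {G : SimpleGraph V} :
    ∀ (n : ℕ) (a b : V) (p : G.Walk a b), p.length ≤ n → a ≠ b → ¬ G.Adj a b →
    ∃ v x y, G.Adj v x ∧ G.Adj v y ∧ x ≠ y ∧ ¬ G.Adj x y := by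
  intro n
  induction n with
  | zero =>
      intro a b p hl hne _
      cases p with
      | nil => exact absurd rfl hne
      | cons h q => simp [SimpleGraph.Walk.length_cons] at hl
  | succ n ih =>
      intro a b p hl hne hnadj
      cases p with
      | nil => exact absurd rfl hne
      | cons h q =>
          rename_i c
          by_cases hcb : G.Adj c b
          · exact ⟨c, a, b, h.symm, hcb, hne, hnadj⟩
          · have hcb' : c ≠ b := by rintro rfl; exact hnadj h
            refine ih c b q ?_ hcb' hcb
            simp only [SimpleGraph.Walk.length_cons] at hl
            omega

lemma exists_pattern {G : SimpleGraph V} {a b : V} (h : (tildeG G ∅).Adj a b)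
    (hnadj : ¬ G.Adj a b) :
    ∃ v x y, G.Adj v x ∧ G.Adj v y ∧ x ≠ y ∧ ¬ G.Adj x y := by
  obtain ⟨hne, -, -, hr⟩ := h
  rw [delSet_empty] at hr
  obtain ⟨p⟩ := hr
  exact exists_pattern_of_walk p.length a b p le_rfl hne hnadj

lemma tildeG_eq_of_mG_zero [Fintype V] {G : SimpleGraph V} (h : mG G = 0) : tildeG G ∅ = G := by
  apply le_antisymm _ (le_tildeG G)
  rw [← SimpleGraph.edgeSet_subset_edgeSet]
  have h2 : (tildeG G ∅).edgeSet \ G.edgeSet = ∅ :=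
    (Set.ncard_eq_zero (Set.toFinite _)).mp h
  rwa [Set.diff_eq_empty] at h2

lemma PTIdeal_empty (G : SimpleGraph V) : PTIdeal K G ∅ = beIdeal K (tildeG G ∅) := by
  rw [PTIdeal]
  simp [Ideal.span_empty]

lemma delSet_union_singleton (G : SimpleGraph V) (T : Set V) (v : V) :
    delSet G (T ∪ {v}) = delSet (delSet G {v}) T := by
  ext u w
  show (G.Adj u w ∧ u ∉ T ∪ {v} ∧ w ∉ T ∪ {v}) ↔
    ((G.Adj u w ∧ u ∉ ({v} : Set V) ∧ w ∉ ({v} : Set V)) ∧ u ∉ T ∧ w ∉ T)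
  simp only [Set.mem_union, Set.mem_singleton_iff]
  tauto

lemma tildeG_union_singleton_le {G : SimpleGraph V} {T : Set V} {v u w : V}
    (h : (tildeG G (T ∪ {v})).Adj u w) : (tildeG (delSet G {v}) T).Adj u w := by
  obtain ⟨hne, hu, hw, hr⟩ := h
  rw [delSet_union_singleton] at hr
  exact ⟨hne, fun hT => hu (Or.inl hT), fun hT => hw (Or.inl hT), hr⟩

lemma psi_PT (v : V) (G : SimpleGraph V) (T : Set V) {f : MvPolynomial (V ⊕ V) K}
    (hf : f ∈ PTIdeal K G (T ∪ {v})) :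
    psi K v f ∈ PTIdeal K (delSet G {v}) T := by
  have hle : PTIdeal K G (T ∪ {v}) ≤
      Ideal.comap (psi K v) (PTIdeal K (delSet G {v}) T) := by
    rw [PTIdeal]
    apply sup_le
    · rw [Ideal.span_le]
      rintro g (⟨i, hi, rfl⟩ | ⟨i, hi, rfl⟩)
      · simp only [SetLike.mem_coe, Ideal.mem_comap, psi_X_inl]
        by_cases hiv : i = v
        · simp [hiv]
        · rw [if_neg hiv]
          rcases hi with hi | hi
          · exact Ideal.mem_sup_left (Ideal.subset_span (Or.inl ⟨i, hi, rfl⟩))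
          · exact absurd hi hiv
      · simp only [SetLike.mem_coe, Ideal.mem_comap, psi_X_inr]
        by_cases hiv : i = v
        · simp [hiv]
        · rw [if_neg hiv]
          rcases hi with hi | hi
          · exact Ideal.mem_sup_left (Ideal.subset_span (Or.inr ⟨i, hi, rfl⟩))
          · exact absurd hi hiv
    · rw [beIdeal, Ideal.span_le]
      rintro g ⟨u, w, hadj, rfl⟩
      have h2 := tildeG_union_singleton_le hadj
      have hu : u ≠ v := fun hc => hadj.2.1 (Or.inr hc)
      have hw : w ≠ v := fun hc => hadj.2.2.1 (Or.inr hc)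
      simp only [SetLike.mem_coe, Ideal.mem_comap, map_sub, map_mul, psi_X_inl, psi_X_inr,
        if_neg hu, if_neg hw]
      exact Ideal.mem_sup_right (Ideal.subset_span ⟨u, w, h2, rfl⟩)
  exact hle hf

section Main
variable [Fintype V]

lemma base_case {G : SimpleGraph V} (hm : mG G = 0) :
    (⨅ T : Set V, PTIdeal K G T) ≤ beIdeal K G := by
  intro f hf
  have h := (Submodule.mem_iInf _).mp hf ∅
  rwa [PTIdeal_empty, tildeG_eq_of_mG_zero hm] at h

lemma key (N : ℕ) : ∀ (G : SimpleGraph V), mu G ≤ N →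
    (⨅ T : Set V, PTIdeal K G T) ≤ beIdeal K G := by
  induction N with
  | zero =>
      intro G hG
      have h0 : mu G = 0 := Nat.le_zero.mp hG
      rw [mu, Nat.add_eq_zero, Nat.mul_eq_zero] at h0
      rcases h0.1 with h0 | h0
      · exact base_case h0
      · exact absurd h0 (Nat.succ_ne_zero _)
  | succ N ih =>
      intro G hG
      by_cases hm : mG G = 0
      · exact base_case hm
      · have hne : ((tildeG G ∅).edgeSet \ G.edgeSet).Nonempty := by
          rw [Set.nonempty_iff_ne_empty]
          intro hc
          exact hm (by rw [mG, hc, Set.ncard_empty])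
        obtain ⟨e, he⟩ := hne
        revert he
        induction e using Sym2.ind with
        | _ x y =>
          intro he
          rw [Set.mem_diff, SimpleGraph.mem_edgeSet, SimpleGraph.mem_edgeSet] at he
          obtain ⟨v, p, q, hvp, hvq, hpq, hnpq⟩ := exists_pattern he.1 he.2
          intro f hf
          rw [Submodule.mem_iInf] at hf
          have h1 : f ∈ beIdeal K (addClique G v) := by
            apply ih (addClique G v)
              (Nat.lt_succ_iff.mp (lt_of_lt_of_le (mu_addClique_lt hvp hvq hpq hnpq) hG))
            rw [Submodule.mem_iInf]
            exact fun T => PTIdeal_mono (le_addClique G v) T (hf T)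
          have h2 : psi K v f ∈ beIdeal K (delSet G {v}) := by
            apply ih (delSet G {v})
              (Nat.lt_succ_iff.mp (lt_of_lt_of_le (mu_delSet_lt hvp) hG))
            rw [Submodule.mem_iInf]
            exact fun T => psi_PT v G T (hf (T ∪ {v}))
          have h3 := sub_psi_mem_beIdeal v G h1
          have h4 := add_mem h3 (beIdeal_mono (delSet_le G {v}) h2)
          rwa [sub_add_cancel] at h4

end Main

end
end BEI

/-- Herzog et al.: the binomial edge ideal is the intersection of the ideals
`P_T(G)` over all subsets `T` of the vertex set. -/
theorem beIdeal_eq_iInf_PTIdeal (K : Type) [Field K] {V : Type} [Fintype V]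
    (G : SimpleGraph V) :
    beIdeal K G = ⨅ T : Set V, PTIdeal K G T := by
  apply le_antisymm
  · exact le_iInf fun T => BEI.beIdeal_le_PTIdeal G T
  · exact BEI.key (BEI.mu G) G le_rfl
end

section
/- For m ≥ 3 and v = 2m−1 in F_m, the graph (F_m)_v is a 1-pure fan graph of the complete graph on N_{F_m}[v] on the set W' = {2, 4, ..., 2m}, and F_m \ v is the disjoint union of F_{m−1} and the isolated vertex 2m. -/
open MvPolynomial

/-- Adjacency relation of the bipartite graph `F_m`, written on 0-indexed labels
`0, …, 2m-1`; in the 1-indexed labelling of the paper the edges are `{2i, 2j-1}`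
for `1 ≤ i ≤ j ≤ m`. -/
def AdjF (m : ℕ) (x y : ℕ) : Prop :=
  ∃ i j : ℕ, i ≤ j ∧ j < m ∧ ((x = 2 * i + 1 ∧ y = 2 * j) ∨ (y = 2 * i + 1 ∧ x = 2 * j))

/-- The graph on `Fin N` whose edges are those of `F_m`. -/
def FmOn (N m : ℕ) : SimpleGraph (Fin N) where
  Adj a b := AdjF m a.val b.val
  symm := by
    constructor
    rintro a b ⟨i, j, h1, h2, h3⟩
    exact ⟨i, j, h1, h2, h3.symm⟩
  loopless := by
    constructor
    rintro a ⟨i, j, h1, h2, h3 | h3⟩ <;> omega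

/-- The graph `F_m` on `2m` vertices. -/
def FmGraph (m : ℕ) : SimpleGraph (Fin (2 * m)) := FmOn (2 * m) m

/-- Data describing a `k`-fan of the complete graph `K_n`:  a partitioned subset
`W = W_1 ⊔ ⋯ ⊔ W_k` of the vertices of `K_n`, with `W_i = {v i 0, …, v i (r i - 1)}`
listed in order, and the sizes `a i j` of the attached cliques `K_{a i j}`, where the
clique of branch `(i,j)` meets `K_n` exactly in `{v i 0, …, v i j}` (so it has
`a i j - (j+1)` new vertices, and `a i j > j + 1` — in the 1-indexed notation of the
paper, `a_{i,j} > j`). -/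
structure FanData (n k : ℕ) where
  r : Fin k → ℕ
  rpos : ∀ i, 1 ≤ r i
  v : ∀ i : Fin k, Fin (r i) → Fin n
  vinj : Function.Injective (fun p : Σ i : Fin k, Fin (r i) => v p.1 p.2)
  a : ∀ i : Fin k, Fin (r i) → ℕ
  abig : ∀ i j, j.val + 1 < a i j

/-- The vertex set of the fan graph: the vertices of `K_n` together with the new
vertices of each branch clique. -/
def FanV {n k : ℕ} (D : FanData n k) : Type :=
  Fin n ⊕ Σ i : Fin k, Σ j : Fin (D.r i), Fin (D.a i j - (j.val + 1))

/-- Membership in the branch clique `K_{a i j}`, which consists of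
`v i 0, …, v i j` together with the new vertices of branch `(i,j)`. -/
def inBranch {n k : ℕ} (D : FanData n k) (i : Fin k) (j : Fin (D.r i)) :
    FanV D → Prop
  | Sum.inl x => ∃ j' : Fin (D.r i), j'.val ≤ j.val ∧ x = D.v i j'
  | Sum.inr p => p.1 = i ∧ p.2.1.val = j.val

/-- The `k`-fan graph `F_k^W(K_n)`: the complete graph `K_n` with a fan added on
each part `W_i` of `W`. -/
def fanGraph {n k : ℕ} (D : FanData n k) : SimpleGraph (FanV D) where
  Adj u w := u ≠ w ∧ ((∃ x y, u = Sum.inl x ∧ w = Sum.inl y) ∨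
    ∃ i j, inBranch D i j u ∧ inBranch D i j w)
  symm := by
    constructor
    rintro u w ⟨h1, h2 | ⟨i, j, h3, h4⟩⟩
    · obtain ⟨x, y, hx, hy⟩ := h2
      exact ⟨h1.symm, Or.inl ⟨y, x, hy, hx⟩⟩
    · exact ⟨h1.symm, Or.inr ⟨i, j, h4, h3⟩⟩
  loopless := by constructor; rintro u ⟨h1, _⟩; exact h1 rfl

/-- `D` describes a `k`-pure fan: each branch clique `K_{a i j}` has `a i j = j + 2`
vertices (in the 1-indexed notation, `a_{i,j} = j + 1`), i.e. exactly one new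
vertex. -/
def FanData.IsPure {n k : ℕ} (D : FanData n k) : Prop :=
  ∀ (i : Fin k) (j : Fin (D.r i)), D.a i j = j.val + 2

/-! ### Auxiliary development -/

lemma adjF_iff (m x y : ℕ) : AdjF m x y ↔
    ((x % 2 = 1 ∧ y % 2 = 0 ∧ x ≤ y + 1 ∧ y < 2 * m) ∨
     (y % 2 = 1 ∧ x % 2 = 0 ∧ y ≤ x + 1 ∧ x < 2 * m)) := by
  constructor
  · rintro ⟨i, j, h1, h2, h3 | h3⟩
    · left; omega
    · right; omega
  · rintro (h | h)
    · exact ⟨x / 2, y / 2, by omega, by omega, Or.inl ⟨by omega, by omega⟩⟩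
    · exact ⟨y / 2, x / 2, by omega, by omega, Or.inr ⟨by omega, by omega⟩⟩

/-- The pure `1`-fan data for `(F_m)_v`. -/
def myFan (m : ℕ) (hm : 3 ≤ m) : FanData (m + 1) 1 where
  r := fun _ => m - 1
  rpos := fun _ => by show 1 ≤ m - 1; omega
  v := fun _ j => ⟨j.val, by have : j.val < m - 1 := j.isLt; omega⟩
  vinj := by
    rintro ⟨i, j⟩ ⟨i', j'⟩ h
    obtain rfl : i = i' := Subsingleton.elim _ _
    dsimp only at h
    simp only [Fin.mk.injEq] at h
    obtain rfl : j = j' := Fin.ext h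
    rfl
  a := fun _ j => j.val + 2
  abig := fun _ j => by show j.val + 1 < j.val + 2; omega

lemma fanv_inr_eq (m : ℕ) (hm : 3 ≤ m) (j j' : Fin ((myFan m hm).r 0))
    (z : Fin ((myFan m hm).a 0 j - (j.val + 1)))
    (z' : Fin ((myFan m hm).a 0 j' - (j'.val + 1)))
    (h : j.val = j'.val) :
    (Sum.inr ⟨0, j, z⟩ : FanV (myFan m hm)) = Sum.inr ⟨0, j', z'⟩ := by
  obtain rfl : j = j' := Fin.ext h
  obtain rfl : z = z' := by
    have h1 : z.val < j.val + 2 - (j.val + 1) := z.isLt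
    have h2 : z'.val < j.val + 2 - (j.val + 1) := z'.isLt
    exact Fin.ext (by omega)
  rfl

def fwd (m : ℕ) (hm : 3 ≤ m) : Fin (2 * m) → FanV (myFan m hm) := fun x =>
  if h1 : x.val % 2 = 1 then Sum.inl ⟨x.val / 2, by have := x.isLt; omega⟩
  else if h2 : x.val = 2 * m - 2 then Sum.inl ⟨m, by omega⟩
  else Sum.inr ⟨0, ⟨x.val / 2, by show x.val / 2 < m - 1; have := x.isLt; omega⟩,
    ⟨0, by show 0 < x.val / 2 + 2 - (x.val / 2 + 1); omega⟩⟩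

def bwd (m : ℕ) (hm : 3 ≤ m) : FanV (myFan m hm) → Fin (2 * m)
  | Sum.inl x => if h : x.val < m then ⟨2 * x.val + 1, by omega⟩ else ⟨2 * m - 2, by omega⟩
  | Sum.inr p => ⟨2 * p.2.1.val, by have : p.2.1.val < m - 1 := p.2.1.isLt; omega⟩

lemma fwd_odd (m : ℕ) (hm : 3 ≤ m) (x : Fin (2 * m)) (h : x.val % 2 = 1) :
    fwd m hm x = Sum.inl ⟨x.val / 2, by have := x.isLt; omega⟩ := by
  unfold fwd; exact dif_pos h

lemma fwd_vv (m : ℕ) (hm : 3 ≤ m) (x : Fin (2 * m)) (h : x.val = 2 * m - 2) :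
    fwd m hm x = Sum.inl ⟨m, by omega⟩ := by
  unfold fwd; exact (dif_neg (by omega : ¬ (x.val % 2 = 1))).trans (dif_pos h)

lemma fwd_even (m : ℕ) (hm : 3 ≤ m) (x : Fin (2 * m)) (h : x.val % 2 = 0)
    (h' : x.val ≠ 2 * m - 2) :
    fwd m hm x = Sum.inr ⟨0, ⟨x.val / 2, by show x.val / 2 < m - 1; have := x.isLt; omega⟩,
      ⟨0, by show 0 < x.val / 2 + 2 - (x.val / 2 + 1); omega⟩⟩ := by
  unfold fwd; exact (dif_neg (by omega : ¬ (x.val % 2 = 1))).trans (dif_neg h')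

lemma bwd_inl_lt (m : ℕ) (hm : 3 ≤ m) (x : Fin (m + 1)) (h : x.val < m) :
    bwd m hm (Sum.inl x) = ⟨2 * x.val + 1, by omega⟩ := by
  show (if h : x.val < m then (⟨2 * x.val + 1, by omega⟩ : Fin (2 * m))
    else ⟨2 * m - 2, by omega⟩) = _
  rw [dif_pos h]

lemma bwd_inl_ge (m : ℕ) (hm : 3 ≤ m) (x : Fin (m + 1)) (h : ¬ x.val < m) :
    bwd m hm (Sum.inl x) = ⟨2 * m - 2, by omega⟩ := by
  show (if h : x.val < m then (⟨2 * x.val + 1, by omega⟩ : Fin (2 * m))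
    else ⟨2 * m - 2, by omega⟩) = _
  rw [dif_neg h]

lemma leftInv (m : ℕ) (hm : 3 ≤ m) : Function.LeftInverse (bwd m hm) (fwd m hm) := by
  intro x
  have hx := x.isLt
  by_cases h : x.val % 2 = 1
  · rw [fwd_odd m hm x h, bwd_inl_lt m hm _ (by show x.val / 2 < m; omega)]
    exact Fin.ext (by show 2 * (x.val / 2) + 1 = x.val; omega)
  · by_cases h' : x.val = 2 * m - 2
    · rw [fwd_vv m hm x h', bwd_inl_ge m hm _ (by show ¬ m < m; omega)]
      exact Fin.ext (by show 2 * m - 2 = x.val; omega)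
    · rw [fwd_even m hm x (by omega) h']
      exact Fin.ext (by show 2 * (x.val / 2) = x.val; omega)

lemma rightInv (m : ℕ) (hm : 3 ≤ m) : Function.RightInverse (bwd m hm) (fwd m hm) := by
  rintro (x | ⟨i, j, z⟩)
  · have hx : x.val < m + 1 := x.isLt
    by_cases h : x.val < m
    · rw [bwd_inl_lt m hm x h, fwd_odd m hm _ (by show (2 * x.val + 1) % 2 = 1; omega)]
      exact congrArg Sum.inl (Fin.ext (by show (2 * x.val + 1) / 2 = x.val; omega))
    · rw [bwd_inl_ge m hm x h, fwd_vv m hm _ (by show 2 * m - 2 = 2 * m - 2; rfl)]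
      exact congrArg Sum.inl (Fin.ext (by show m = x.val; omega))
  · obtain rfl : i = 0 := Subsingleton.elim _ _
    have hj : j.val < m - 1 := j.isLt
    have hb : bwd m hm (Sum.inr ⟨0, j, z⟩) = ⟨2 * j.val, by omega⟩ := rfl
    rw [hb, fwd_even m hm _ (by show 2 * j.val % 2 = 0; omega)
      (by show 2 * j.val ≠ 2 * m - 2; omega)]
    exact fanv_inr_eq m hm _ j _ z (by show 2 * j.val / 2 = j.val; omega)

lemma fan_adj_inl_inl (m : ℕ) (hm : 3 ≤ m) (x y : Fin (m + 1)) :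
    (fanGraph (myFan m hm)).Adj (Sum.inl x) (Sum.inl y) ↔ x ≠ y := by
  constructor
  · rintro ⟨h, -⟩
    exact fun e => h (congrArg Sum.inl e)
  · intro h
    exact ⟨fun e => h (Sum.inl.inj e), Or.inl ⟨x, y, rfl, rfl⟩⟩

lemma fan_adj_inl_inr (m : ℕ) (hm : 3 ≤ m) (x : Fin (m + 1))
    (i : Fin 1) (j : Fin ((myFan m hm).r i))
    (z : Fin ((myFan m hm).a i j - (j.val + 1))) :
    (fanGraph (myFan m hm)).Adj (Sum.inl x) (Sum.inr ⟨i, j, z⟩) ↔ x.val ≤ j.val := by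
  constructor
  · rintro ⟨-, ⟨x', y', hx, hy⟩ | ⟨i', j', h1, h2⟩⟩
    · exact absurd hy (by simp)
    · obtain ⟨hi, hj⟩ := h2
      obtain ⟨j'', hle, hx⟩ := h1
      have hx' : x.val = j''.val := by rw [hx]; rfl
      have hj2 : j.val = j'.val := hj
      have hv : ((myFan m hm).v i' j'').val = j''.val := rfl
      omega
  · intro h
    have hj : j.val < m - 1 := j.isLt
    refine ⟨Sum.inl_ne_inr, Or.inr ⟨i, j, ⟨⟨x.val, by show x.val < m - 1; omega⟩, h, rfl⟩,
      rfl, rfl⟩⟩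

lemma fan_not_adj_inr_inr (m : ℕ) (hm : 3 ≤ m)
    (p q : Σ i : Fin 1, Σ j : Fin ((myFan m hm).r i), Fin ((myFan m hm).a i j - (j.val + 1))) :
    ¬ (fanGraph (myFan m hm)).Adj (Sum.inr p) (Sum.inr q) := by
  rintro ⟨hne, ⟨x', y', hx, -⟩ | ⟨i', j', h1, h2⟩⟩
  · exact absurd hx (by simp)
  · obtain ⟨pi, pj, pz⟩ := p
    obtain ⟨qi, qj, qz⟩ := q
    obtain rfl : pi = 0 := Subsingleton.elim _ _
    obtain rfl : qi = 0 := Subsingleton.elim _ _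
    obtain ⟨-, h1'⟩ := h1
    obtain ⟨-, h2'⟩ := h2
    have b1 : pj.val = j'.val := h1'
    have b2 : qj.val = j'.val := h2'
    exact hne (fanv_inr_eq m hm pj qj pz qz (by omega))

lemma addNbhd_adj_iff (m : ℕ) (hm : 3 ≤ m) (vv : Fin (2 * m))
    (hvv : vv.val = 2 * m - 2) (a b : Fin (2 * m)) :
    (addNbhd (FmGraph m) vv).Adj a b ↔ (a.val ≠ b.val ∧
      ((a.val % 2 = 1 ∧ b.val % 2 = 0 ∧ a.val ≤ b.val + 1) ∨
       (b.val % 2 = 1 ∧ a.val % 2 = 0 ∧ b.val ≤ a.val + 1) ∨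
       (a.val % 2 = 1 ∧ b.val % 2 = 1))) := by
  have ha := a.isLt
  have hb := b.isLt
  constructor
  · rintro ⟨h1, h2 | ⟨h3, h4⟩⟩
    · have h2' : AdjF m a.val b.val := h2
      rw [adjF_iff] at h2'
      have hne : a.val ≠ b.val := fun e => h1 (Fin.ext e)
      omega
    · have h3' : AdjF m vv.val a.val := h3
      have h4' : AdjF m vv.val b.val := h4
      rw [adjF_iff] at h3' h4'
      have hne : a.val ≠ b.val := fun e => h1 (Fin.ext e)
      rw [hvv] at h3' h4'
      omega
  · rintro ⟨h1, h2⟩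
    refine ⟨fun e => h1 (congrArg Fin.val e), ?_⟩
    rcases h2 with h | h | h
    · exact Or.inl ((adjF_iff m a.val b.val).2 (Or.inl ⟨h.1, h.2.1, h.2.2, hb⟩))
    · exact Or.inl ((adjF_iff m a.val b.val).2 (Or.inr ⟨h.1, h.2.1, h.2.2, ha⟩))
    · exact Or.inr ⟨(adjF_iff m vv.val a.val).2 (Or.inr ⟨h.1, by omega, by omega, by omega⟩),
        (adjF_iff m vv.val b.val).2 (Or.inr ⟨h.2, by omega, by omega, by omega⟩)⟩

lemma map_rel (m : ℕ) (hm : 3 ≤ m) (vv : Fin (2 * m)) (hvv : vv.val = 2 * m - 2)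
    (a b : Fin (2 * m)) :
    (fanGraph (myFan m hm)).Adj (fwd m hm a) (fwd m hm b) ↔
      (addNbhd (FmGraph m) vv).Adj a b := by
  have ha := a.isLt
  have hb := b.isLt
  rw [addNbhd_adj_iff m hm vv hvv]
  by_cases pa : a.val % 2 = 1
  · rw [fwd_odd m hm a pa]
    by_cases pb : b.val % 2 = 1
    · rw [fwd_odd m hm b pb, fan_adj_inl_inl]
      simp only [ne_eq, Fin.mk.injEq]
      omega
    · by_cases qb : b.val = 2 * m - 2
      · rw [fwd_vv m hm b qb, fan_adj_inl_inl]
        simp only [ne_eq, Fin.mk.injEq]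
        omega
      · rw [fwd_even m hm b (by omega) qb, fan_adj_inl_inr]
        show a.val / 2 ≤ b.val / 2 ↔ _
        omega
  · by_cases qa : a.val = 2 * m - 2
    · rw [fwd_vv m hm a qa]
      by_cases pb : b.val % 2 = 1
      · rw [fwd_odd m hm b pb, fan_adj_inl_inl]
        simp only [ne_eq, Fin.mk.injEq]
        omega
      · by_cases qb : b.val = 2 * m - 2
        · rw [fwd_vv m hm b qb, fan_adj_inl_inl]
          exact iff_of_false (by simp) (by omega)
        · rw [fwd_even m hm b (by omega) qb, fan_adj_inl_inr]
          show m ≤ b.val / 2 ↔ _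
          omega
    · rw [fwd_even m hm a (by omega) qa]
      by_cases pb : b.val % 2 = 1
      · rw [fwd_odd m hm b pb]; refine (SimpleGraph.adj_comm _ _ _).trans ?_; rw [fan_adj_inl_inr]
        show b.val / 2 ≤ a.val / 2 ↔ _
        omega
      · by_cases qb : b.val = 2 * m - 2
        · rw [fwd_vv m hm b qb]; refine (SimpleGraph.adj_comm _ _ _).trans ?_; rw [fan_adj_inl_inr]
          show m ≤ a.val / 2 ↔ _
          omega
        · rw [fwd_even m hm b (by omega) qb]
          exact iff_of_false (fan_not_adj_inr_inr m hm _ _) (by omega)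

/-- For `m ≥ 3` and `v = 2m - 1` (1-indexed; label `2m - 2`, 0-indexed) in `F_m`:
`(F_m)_v` is a `1`-pure fan graph of the complete graph on `N_{F_m}[v]` whose fan is
added on the even-labelled vertices `W' = {2, 4, …}` of `F_m`, and `F_m \ v` is
the disjoint union of `F_{m-1}` and isolated vertices. -/
theorem Fm_addNbhd_structure (m : ℕ) (hm : 3 ≤ m) (vv : Fin (2 * m))
    (hvv : vv.val = 2 * m - 2) :
    (∃ D : FanData (m + 1) 1, D.IsPure ∧ D.r 0 = m - 1 ∧
      ∃ e : addNbhd (FmGraph m) vv ≃g fanGraph D,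
        (∀ x : Fin (2 * m), (∃ y, e x = Sum.inl y) ↔
          (x ∈ (FmGraph m).neighborSet vv ∨ x = vv)) ∧
        (∀ j' : Fin (D.r 0), ∃ hlt : 2 * j'.val + 1 < 2 * m,
          e ⟨2 * j'.val + 1, hlt⟩ = Sum.inl (D.v 0 j'))) ∧
    delVert (FmGraph m) vv = FmOn (2 * m) (m - 1) := by
  constructor
  · refine ⟨myFan m hm, fun i j => rfl, rfl,
      ⟨⟨fwd m hm, bwd m hm, leftInv m hm, rightInv m hm⟩,
        fun {a b} => map_rel m hm vv hvv a b⟩, ?_, ?_⟩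
    · intro x
      have hx := x.isLt
      show (∃ y, fwd m hm x = Sum.inl y) ↔ _
      by_cases px : x.val % 2 = 1
      · rw [fwd_odd m hm x px]
        refine iff_of_true ⟨_, rfl⟩ (Or.inl ?_)
        show AdjF m vv.val x.val
        rw [adjF_iff]
        right
        omega
      · by_cases qx : x.val = 2 * m - 2
        · rw [fwd_vv m hm x qx]
          exact iff_of_true ⟨_, rfl⟩ (Or.inr (Fin.ext (by omega)))
        · rw [fwd_even m hm x (by omega) qx]
          refine iff_of_false ?_ ?_
          · rintro ⟨y, hy⟩
            exact absurd hy (by simp)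
          · rintro (h | h)
            · have h' : AdjF m vv.val x.val := h
              rw [adjF_iff] at h'
              omega
            · exact qx (by rw [h, hvv])
    · intro j'
      have hj : j'.val < m - 1 := j'.isLt
      refine ⟨by omega, ?_⟩
      show fwd m hm ⟨2 * j'.val + 1, by omega⟩ = Sum.inl ((myFan m hm).v 0 j')
      rw [fwd_odd m hm _ (by show (2 * j'.val + 1) % 2 = 1; omega)]
      exact congrArg Sum.inl (Fin.ext (by show (2 * j'.val + 1) / 2 = j'.val; omega))
  · ext a b
    have ha := a.isLt
    have hb := b.isLt
    constructor
    · rintro ⟨h1, h2, h3⟩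
      have h1' : AdjF m a.val b.val := h1
      rw [adjF_iff] at h1'
      have h2' : a.val ≠ 2 * m - 2 := fun e => h2 (Fin.ext (e.trans hvv.symm))
      have h3' : b.val ≠ 2 * m - 2 := fun e => h3 (Fin.ext (e.trans hvv.symm))
      show AdjF (m - 1) a.val b.val
      rw [adjF_iff]
      omega
    · intro h
      have h' : AdjF (m - 1) a.val b.val := h
      rw [adjF_iff] at h'
      refine ⟨(adjF_iff m a.val b.val).2 (by omega), fun e => ?_, fun e => ?_⟩
      · have := congrArg Fin.val e
        rw [hvv] at this
        omega
      · have := congrArg Fin.val e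
        rw [hvv] at this
        omega
end
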